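/- (Monotonicity of the ratio of comparison sine functions, used in the proof of Lemma 3.5) Let K ≤ κ ≤ 0. Then the function r ↦ sn_K(r)/sn_κ(r) is non-decreasing on (0,∞). Consequently, for every integer n ≥ 2 and all 0 < r ≤ d, ( sn_K(r)/sn_κ(r) )^{n−1} ≤ ( sn_K(d)/sn_κ(d) )^{n−1}. -/

import Mathlib

open Set

/-- `x * cosh x - sinh x ≥ 0` for `x ≥ 0`. -/
lemma aux_sinh_le_mul_cosh {x : ℝ} (hx : 0 ≤ x) : Real.sinh x ≤ x * Real.cosh x := by
  have hmono : MonotoneOn (fun x => x * Real.cosh x - Real.sinh x) (Ici 0) := by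
    have hd : ∀ y : ℝ, HasDerivAt (fun x => x * Real.cosh x - Real.sinh x)
        (y * Real.sinh y) y := by
      intro y
      have h1 : HasDerivAt (fun x : ℝ => x * Real.cosh x)
          (1 * Real.cosh y + y * Real.sinh y) y :=
        (hasDerivAt_id y).mul (Real.hasDerivAt_cosh y)
      have : HasDerivAt (fun x => x * Real.cosh x - Real.sinh x)
          (1 * Real.cosh y + y * Real.sinh y - Real.cosh y) y := h1.sub (Real.hasDerivAt_sinh y)
      convert this using 1
      ring
    apply monotoneOn_of_deriv_nonneg (convex_Ici 0)
    · exact ((continuous_id.mul Real.continuous_cosh).sub Real.continuous_sinh).continuousOn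
    · intro y _
      exact (hd y).differentiableAt.differentiableWithinAt
    · intro y hy
      rw [interior_Ici, mem_Ioi] at hy
      rw [(hd y).deriv]
      have : 0 ≤ Real.sinh y := Real.sinh_nonneg_iff.mpr hy.le
      positivity
  have := hmono (self_mem_Ici) (mem_Ici.mpr hx) hx
  simp only [Real.sinh_zero, Real.cosh_zero, mul_one, zero_mul, sub_zero] at this
  linarith

/-- `sinh x / x` is monotone on `(0, ∞)`. -/
lemma aux_sinh_div_mono : MonotoneOn (fun x => Real.sinh x / x) (Ioi 0) := by
  have hD : ∀ x : ℝ, 0 < x → HasDerivAt (fun x => Real.sinh x / x)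
      ((Real.cosh x * x - Real.sinh x * 1) / x ^ 2) x := by
    intro x hx
    exact (Real.hasDerivAt_sinh x).div (hasDerivAt_id x) (ne_of_gt hx)
  apply monotoneOn_of_deriv_nonneg (convex_Ioi 0)
  · exact ContinuousOn.div Real.continuous_sinh.continuousOn continuousOn_id
      (fun x hx => ne_of_gt hx)
  · intro x hx
    rw [interior_Ioi, mem_Ioi] at hx
    exact (hD x hx).differentiableAt.differentiableWithinAt
  · intro x hx
    rw [interior_Ioi, mem_Ioi] at hx
    rw [(hD x hx).deriv]
    have h := aux_sinh_le_mul_cosh hx.le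
    have hx2 : (0:ℝ) < x ^ 2 := by positivity
    apply div_nonneg _ hx2.le
    simp only [id_eq, mul_one]
    linarith

/-- For `0 ≤ u ≤ v`, `v * sinh u ≤ u * sinh v`. -/
lemma aux_mul_sinh_le {u v : ℝ} (hu : 0 ≤ u) (huv : u ≤ v) :
    v * Real.sinh u ≤ u * Real.sinh v := by
  rcases eq_or_lt_of_le hu with h | h
  · simp [← h]
  · have hv : 0 < v := lt_of_lt_of_le h huv
    have := aux_sinh_div_mono (mem_Ioi.mpr h) (mem_Ioi.mpr hv) huv
    rw [div_le_div_iff₀ h hv] at this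
    linarith

/-- Key inequality: for `0 ≤ t ≤ s`, `t * sinh s * cosh t ≤ s * cosh s * sinh t`. -/
lemma aux_key {s t : ℝ} (ht : 0 ≤ t) (hts : t ≤ s) :
    t * Real.sinh s * Real.cosh t ≤ s * Real.cosh s * Real.sinh t := by
  have h := aux_mul_sinh_le (u := s - t) (v := s + t) (by linarith) (by linarith)
  rw [Real.sinh_sub, Real.sinh_add] at h
  nlinarith [h]

/-- Monotonicity of `r ↦ sinh (a r) / sinh (b r)` on `(0, ∞)` for `0 < b ≤ a`. -/
lemma aux_ratio_mono {a b : ℝ} (hb : 0 < b) (hab : b ≤ a) :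
    MonotoneOn (fun r => Real.sinh (a * r) / Real.sinh (b * r)) (Ioi 0) := by
  have hderiv : ∀ r : ℝ, 0 < r → HasDerivAt (fun r => Real.sinh (a * r) / Real.sinh (b * r))
      ((Real.cosh (a * r) * a * Real.sinh (b * r) -
        Real.sinh (a * r) * (Real.cosh (b * r) * b)) / Real.sinh (b * r) ^ 2) r := by
    intro r hr
    have hbr : (0:ℝ) < b * r := by positivity
    have h1 : HasDerivAt (fun r => Real.sinh (a * r)) (Real.cosh (a * r) * a) r := by
      have := ((hasDerivAt_id r).const_mul a).sinh
      simpa using this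
    have h2 : HasDerivAt (fun r => Real.sinh (b * r)) (Real.cosh (b * r) * b) r := by
      have := ((hasDerivAt_id r).const_mul b).sinh
      simpa using this
    exact h1.div h2 (ne_of_gt (Real.sinh_pos_iff.mpr hbr))
  apply monotoneOn_of_deriv_nonneg (convex_Ioi 0)
  · apply ContinuousOn.div
    · exact (Real.continuous_sinh.comp (continuous_const.mul continuous_id)).continuousOn
    · exact (Real.continuous_sinh.comp (continuous_const.mul continuous_id)).continuousOn
    · intro x hx
      rw [mem_Ioi] at hx
      exact ne_of_gt (Real.sinh_pos_iff.mpr (by positivity))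
  · intro r hr
    rw [interior_Ioi, mem_Ioi] at hr
    exact (hderiv r hr).differentiableAt.differentiableWithinAt
  · intro r hr
    rw [interior_Ioi, mem_Ioi] at hr
    rw [(hderiv r hr).deriv]
    have hbr : (0:ℝ) < b * r := by positivity
    have har : (0:ℝ) < a * r := mul_pos (hb.trans_le hab) hr
    have hkey := aux_key (s := a * r) (t := b * r) hbr.le
      (mul_le_mul_of_nonneg_right hab hr.le)
    have hs : 0 < Real.sinh (b * r) := Real.sinh_pos_iff.mpr hbr
    apply div_nonneg _ (sq_nonneg _)
    nlinarith [hkey, hr]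

/-- The comparison sine function `sn_κ` for `κ ≤ 0`: `sn_0(t) = t` and
`sn_κ(t) = sinh(√(-κ) t)/√(-κ)` for `κ < 0`. -/
noncomputable def snk (κ : ℝ) (t : ℝ) : ℝ :=
  if κ = 0 then t else Real.sinh (Real.sqrt (-κ) * t) / Real.sqrt (-κ)

lemma snk_pos {κ : ℝ} (hκ : κ ≤ 0) {r : ℝ} (hr : 0 < r) : 0 < snk κ r := by
  unfold snk
  split_ifs with h
  · exact hr
  · have hκ' : 0 < -κ := by cases lt_or_eq_of_le hκ with
      | inl h' => linarith
      | inr h' => exact absurd h' h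
    have hs : 0 < Real.sqrt (-κ) := Real.sqrt_pos.mpr hκ'
    exact div_pos (Real.sinh_pos_iff.mpr (by positivity)) hs

/-- Monotonicity of the ratio of comparison sine functions (used in Lemma 3.5): for
`K ≤ κ ≤ 0`, the function `r ↦ sn_K(r)/sn_κ(r)` is non-decreasing on `(0,∞)`; consequently
`(sn_K(r)/sn_κ(r))^{n-1} ≤ (sn_K(d)/sn_κ(d))^{n-1}` whenever `0 < r ≤ d` and `n ≥ 2`. -/
theorem snk_ratio_monotone (K κ : ℝ) (hK : K ≤ κ) (hκ : κ ≤ 0) :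
    MonotoneOn (fun r => snk K r / snk κ r) (Ioi 0) ∧
    ∀ n : ℕ, 2 ≤ n → ∀ r d : ℝ, 0 < r → r ≤ d →
      (snk K r / snk κ r) ^ (n - 1) ≤ (snk K d / snk κ d) ^ (n - 1) := by
  have hmono : MonotoneOn (fun r => snk K r / snk κ r) (Ioi 0) := by
    rcases eq_or_lt_of_le (hK.trans hκ) with hK0 | hK0
    · -- K = 0, hence κ = 0
      have hκ0 : κ = 0 := le_antisymm hκ (hK0 ▸ hK)
      intro x hx y hy hxy
      rw [mem_Ioi] at hx hy
      simp [snk, ← hK0, hκ0, div_self hx.ne', div_self hy.ne']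
    · -- K < 0
      have ha : 0 < Real.sqrt (-K) := Real.sqrt_pos.mpr (by linarith)
      rcases eq_or_lt_of_le hκ with hκ0 | hκ0
      · -- κ = 0 : ratio is sinh(a r)/(a r)
        intro x hx y hy hxy
        rw [mem_Ioi] at hx hy
        have hax : 0 < Real.sqrt (-K) * x := by positivity
        have hay : 0 < Real.sqrt (-K) * y := by positivity
        have h := aux_sinh_div_mono (mem_Ioi.mpr hax) (mem_Ioi.mpr hay)
          (by nlinarith)
        subst hκ0
        simp only [snk, if_pos rfl, if_neg (ne_of_lt hK0)]
        rw [div_div, div_div]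
        simpa [mul_comm] using h
      · -- κ < 0
        have hb : 0 < Real.sqrt (-κ) := Real.sqrt_pos.mpr (by linarith)
        have hba : Real.sqrt (-κ) ≤ Real.sqrt (-K) :=
          Real.sqrt_le_sqrt (by linarith)
        intro x hx y hy hxy
        rw [mem_Ioi] at hx hy
        have h := aux_ratio_mono hb hba (mem_Ioi.mpr hx) (mem_Ioi.mpr hy) hxy
        simp only at h
        simp only [snk, if_neg (ne_of_lt hK0), if_neg (ne_of_lt hκ0)]
        rw [div_div_div_comm (Real.sinh (Real.sqrt (-K) * x)) (Real.sqrt (-K))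
              (Real.sinh (Real.sqrt (-κ) * x)) (Real.sqrt (-κ)),
            div_div_div_comm (Real.sinh (Real.sqrt (-K) * y)) (Real.sqrt (-K))
              (Real.sinh (Real.sqrt (-κ) * y)) (Real.sqrt (-κ))]
        exact (div_le_div_iff_of_pos_right (div_pos ha hb)).mpr h
  refine ⟨hmono, fun n hn r d hr hrd => ?_⟩
  have hd : 0 < d := lt_of_lt_of_le hr hrd
  have h1 : snk K r / snk κ r ≤ snk K d / snk κ d :=
    hmono (mem_Ioi.mpr hr) (mem_Ioi.mpr hd) hrd
  have h0 : 0 ≤ snk K r / snk κ r :=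
    div_nonneg (snk_pos (hK.trans hκ) hr).le (snk_pos hκ hr).le
  exact pow_le_pow_left₀ h0 h1 _
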